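/- Let a = (a_1,…,a_n) be a non-decreasing sequence of positive integers and let b = (b_1,…,b_n) be any sequence of positive integers with increasing rearrangement b'_1 ≤ … ≤ b'_n. In the construction of H(b), the cell placed in the i-th column from the right lies in row b'_i; consequently, all cells of H(b) lie inside the Young diagram Y_a if and only if b is an a-parking function. -/
import Mathlib


open Finset

/-- `b` is an `a`-parking function: all entries are positive and the increasing
rearrangement `b ∘ Tuple.sort b` satisfies `b'_i ≤ a_i` (here `a` is 1-indexed). -/
def IsAPF {n : ℕ} (a : ℕ → ℕ) (b : Fin n → ℕ) : Prop :=
  (∀ i, 1 ≤ b i) ∧ ∀ i : Fin n, (b ∘ Tuple.sort b) i ≤ a ((i : ℕ) + 1)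

/-- `cnt b j` is the number of entries of `b` which are at most `j`. -/
def cnt {n : ℕ} (b : Fin n → ℕ) (j : ℕ) : ℕ := (Finset.univ.filter fun i => b i ≤ j).card

/-- In the construction of `H(b)`, the cells placed in row `j` occupy the from-the-right
column positions `cnt b (j-1) + 1, …, cnt b j`; hence the row of the `i`-th column
from the right (`i` 1-indexed) is the least `j` with `i ≤ cnt b j`. -/
noncomputable def rowHb {n : ℕ} (b : Fin n → ℕ) (i : ℕ) : ℕ := sInf {j : ℕ | i ≤ cnt b j}

lemma cnt_sort {n : ℕ} (b : Fin n → ℕ) (j : ℕ) : cnt (b ∘ Tuple.sort b) j = cnt b j := by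
  unfold cnt
  apply Finset.card_bij' (fun i _ => Tuple.sort b i) (fun i _ => (Tuple.sort b)⁻¹ i)
  · intro i hi
    simp only [Finset.mem_filter, Finset.mem_univ, true_and] at hi ⊢
    exact hi
  · intro i hi
    simp only [Finset.mem_filter, Finset.mem_univ, true_and, Function.comp] at hi ⊢
    simpa using hi
  · intro i _; simp
  · intro i _; simp

lemma cnt_iff {n : ℕ} (b : Fin n → ℕ) (i : Fin n) (j : ℕ) :
    (i : ℕ) + 1 ≤ cnt b j ↔ (b ∘ Tuple.sort b) i ≤ j := by
  rw [← cnt_sort b j]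
  set b' := b ∘ Tuple.sort b with hb'
  have hmono : Monotone b' := Tuple.monotone_sort b
  constructor
  · intro h
    by_contra hlt
    push_neg at hlt
    have hsub : (Finset.univ.filter fun k => b' k ≤ j) ⊆ Finset.univ.filter fun k : Fin n => k < i := by
      intro k hk
      simp only [Finset.mem_filter, Finset.mem_univ, true_and] at hk ⊢
      by_contra hki
      push_neg at hki
      exact absurd (le_trans (hmono hki) hk) (not_le.mpr hlt)
    have := Finset.card_le_card hsub
    have hcard : (Finset.univ.filter fun k : Fin n => k < i).card = (i : ℕ) := by
      have : (Finset.univ.filter fun k : Fin n => k < i) = Finset.Iio i := by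
        ext k; simp
      rw [this]; simp [Fin.card_Iio]
    rw [hcard] at this
    unfold cnt at h
    omega
  · intro h
    have hsub : Finset.Iic i ⊆ Finset.univ.filter fun k => b' k ≤ j := by
      intro k hk
      simp only [Finset.mem_Iic] at hk
      simp only [Finset.mem_filter, Finset.mem_univ, true_and]
      exact le_trans (hmono hk) h
    have := Finset.card_le_card hsub
    rw [Fin.card_Iic] at this
    unfold cnt
    omega

/-- Lemma 2.1: in the construction of `H(b)`, the cell placed in the `i`-th column from
the right lies in row `b'_i` (where `b'` is the increasing rearrangement of `b`);
consequently all cells of `H(b)` lie inside the Young diagram `Y_a` (whose `i`-th column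
from the right has length `a_i`) if and only if `b` is an `a`-parking function. -/
theorem stmt8 (n : ℕ) (hn : 1 ≤ n) (a : ℕ → ℕ)
    (hpos : ∀ i, 1 ≤ i → i ≤ n → 1 ≤ a i)
    (hmono : ∀ i j, 1 ≤ i → i ≤ j → j ≤ n → a i ≤ a j)
    (b : Fin n → ℕ) (hb : ∀ i, 1 ≤ b i) :
    (∀ i : Fin n, rowHb b ((i : ℕ) + 1) = (b ∘ Tuple.sort b) i) ∧
    ((∀ i : Fin n, rowHb b ((i : ℕ) + 1) ≤ a ((i : ℕ) + 1)) ↔ IsAPF a b) := by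
  have key : ∀ i : Fin n, rowHb b ((i : ℕ) + 1) = (b ∘ Tuple.sort b) i := by
    intro i
    unfold rowHb
    have : {j : ℕ | (i : ℕ) + 1 ≤ cnt b j} = Set.Ici ((b ∘ Tuple.sort b) i) := by
      ext j
      simp only [Set.mem_setOf_eq, Set.mem_Ici]
      exact cnt_iff b i j
    rw [this, csInf_Ici]
  refine ⟨key, ?_⟩
  constructor
  · intro h
    exact ⟨hb, fun i => (key i) ▸ h i⟩
  · intro h i
    rw [key i]
    exact h.2 i
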